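/- Let n = m·f be an odd square-free integer with f > 1 a nontrivial divisor, and let y = r·f for some integer r. Then ∑_{x ∈ (ℤ/nℤ)^*} (x/n)·ω_n^{xy} = 0, where ω_n = e^{2πi/n} and (·/n) is the Jacobi symbol. -/

import Mathlib

open Complex Real

theorem jacobi_fourier_vanishes_on_nonunits (n f m r : ℕ)
    (hodd : Odd n) (hsf : Squarefree n) (hn : n = m * f) (hf : 1 < f) :
    ∑ x ∈ (Finset.range n).filter (fun x => Nat.Coprime x n),
        (jacobiSym (x : ℤ) n : ℂ) *
          Complex.exp (2 * Real.pi * Complex.I * (x * (r * f)) / n) = 0 := by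
  classical
  have hn0 : n ≠ 0 := hsf.ne_zero
  have hfn : f ∣ n := ⟨m, by rw [hn, mul_comm]⟩
  have hn1 : 1 < n := lt_of_lt_of_le hf (Nat.le_of_dvd (Nat.pos_of_ne_zero hn0) hfn)
  have hnC : (n : ℂ) ≠ 0 := Nat.cast_ne_zero.mpr hn0
  -- prime p dividing f
  set p := f.minFac with hp_def
  have hp : p.Prime := Nat.minFac_prime (by omega)
  have hpf : p ∣ f := Nat.minFac_dvd f
  have hpn : p ∣ n := hpf.trans hfn
  set n' := n / p with hn'_def
  have hnn' : n = p * n' := (Nat.mul_div_cancel' hpn).symm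
  have hn'0 : n' ≠ 0 := by
    intro h; rw [h, mul_zero] at hnn'; exact hn0 hnn'
  haveI : NeZero n' := ⟨hn'0⟩
  haveI : Fact p.Prime := ⟨hp⟩
  have hp2 : p ≠ 2 := by
    intro h
    have h2n : 2 ∣ n := h ▸ hpn
    rw [Nat.odd_iff] at hodd
    omega
  have hcop : Nat.Coprime p n' := by
    rw [Nat.Prime.coprime_iff_not_dvd hp]
    intro hdvd
    have : p * p ∣ n := by
      rw [hnn']; exact mul_dvd_mul_left p hdvd
    exact hp.one_lt.ne' (Nat.isUnit_iff.mp (hsf p this))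
  -- nonresidue mod p
  obtain ⟨a, ha⟩ := quadraticChar_exists_neg_one ((ZMod.ringChar_zmod_n p).symm ▸ hp2 :
    ringChar (ZMod p) ≠ 2)
  -- CRT element c
  obtain ⟨c, hc1, hc2⟩ := Nat.chineseRemainder hcop a.val 1
  -- jacobiSym c n = -1
  have hJc : jacobiSym (c : ℤ) n = -1 := by
    rw [hnn', jacobiSym.mul_right]
    have h1 : jacobiSym (c : ℤ) p = -1 := by
      rw [← jacobiSym.legendreSym.to_jacobiSym]
      have hcast : ((c : ℤ) : ZMod p) = a := by
        push_cast
        rw [(ZMod.natCast_eq_natCast_iff _ _ _).mpr hc1]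
        simp [ZMod.natCast_val, ZMod.cast_id]
      show quadraticChar (ZMod p) ((c : ℤ) : ZMod p) = -1
      rw [hcast]; exact ha
    have h2 : jacobiSym (c : ℤ) n' = 1 := by
      have hmod : ((c : ℤ) % n') = ((1 : ℤ) % n') := by
        exact_mod_cast congrArg (Nat.cast : ℕ → ℤ) hc2
      rw [jacobiSym.mod_left' hmod, jacobiSym.one_left]
    rw [h1, h2]; ring
  have hcn : Nat.Coprime c n := by
    by_contra hcon
    have : jacobiSym (c : ℤ) n = 0 := by
      haveI : NeZero n := ⟨hn0⟩
      rw [jacobiSym.eq_zero_iff_not_coprime]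
      simpa [Int.gcd, Nat.Coprime] using hcon
    omega
  -- inverse of c mod n
  obtain ⟨d, -, hd⟩ := Nat.exists_mul_mod_eq_one_of_coprime hcn hn1
  -- exp congruence lemma
  have expEq : ∀ a b : ℕ, ((n : ℤ) ∣ (a : ℤ) * (r * f) - (b : ℤ) * (r * f)) →
      Complex.exp (2 * Real.pi * Complex.I * (a * (r * f)) / n)
        = Complex.exp (2 * Real.pi * Complex.I * (b * (r * f)) / n) := by
    rintro a b ⟨k, hk⟩
    rw [Complex.exp_eq_exp_iff_exists_int]
    refine ⟨k, ?_⟩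
    have hkC : (a : ℂ) * (r * f) - (b : ℂ) * (r * f) = (n : ℂ) * k := by
      exact_mod_cast congrArg (Int.cast : ℤ → ℂ) hk
    field_simp
    linear_combination hkC
  set S := (Finset.range n).filter (fun x => Nat.Coprime x n) with hS
  set g : ℕ → ℂ := fun x => (jacobiSym (x : ℤ) n : ℂ) *
      Complex.exp (2 * Real.pi * Complex.I * (x * (r * f)) / n) with hg
  have mem_i : ∀ e : ℕ, Nat.Coprime e n → ∀ x ∈ S, e * x % n ∈ S := by
    intro e he x hx
    rw [hS, Finset.mem_filter, Finset.mem_range] at hx ⊢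
    obtain ⟨hx1, hx2⟩ := hx
    refine ⟨Nat.mod_lt _ (by omega), ?_⟩
    have h3 : Nat.Coprime (e * x) n := Nat.Coprime.mul he hx2
    rw [Nat.Coprime, ← Nat.gcd_rec, Nat.gcd_comm]
    exact h3
  have hcd : Nat.Coprime (c * d) n := by
    rw [Nat.Coprime, Nat.gcd_comm, Nat.gcd_rec, hd]
    exact Nat.gcd_one_left n
  have hdn : Nat.Coprime d n := Nat.Coprime.coprime_dvd_left ⟨c, mul_comm c d⟩ hcd
  have key : ∑ x ∈ S, g x = ∑ x ∈ S, (-1 : ℂ) * g x := by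
    refine Finset.sum_nbij' (fun x => c * x % n) (fun x => d * x % n)
      (mem_i c hcn) (mem_i d hdn) ?_ ?_ ?_
    · intro x hx
      rw [hS, Finset.mem_filter, Finset.mem_range] at hx
      calc d * (c * x % n) % n = d * (c * x) % n := by
            conv_lhs => rw [Nat.mul_mod, Nat.mod_mod_of_dvd _ dvd_rfl, ← Nat.mul_mod]
        _ = (c * d) * x % n := by ring_nf
        _ = (c * d % n) * (x % n) % n := by rw [← Nat.mul_mod]
        _ = x := by rw [hd, one_mul, Nat.mod_mod_of_dvd _ dvd_rfl, Nat.mod_eq_of_lt hx.1]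
    · intro x hx
      rw [hS, Finset.mem_filter, Finset.mem_range] at hx
      calc c * (d * x % n) % n = c * (d * x) % n := by
            conv_lhs => rw [Nat.mul_mod, Nat.mod_mod_of_dvd _ dvd_rfl, ← Nat.mul_mod]
        _ = (c * d) * x % n := by ring_nf
        _ = (c * d % n) * (x % n) % n := by rw [← Nat.mul_mod]
        _ = x := by rw [hd, one_mul, Nat.mod_mod_of_dvd _ dvd_rfl, Nat.mod_eq_of_lt hx.1]
    · intro x hx
      rw [hS, Finset.mem_filter, Finset.mem_range] at hx
      have hJ : jacobiSym ((c * x % n : ℕ) : ℤ) n = - jacobiSym (x : ℤ) n := by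
        have hmod : (((c * x % n : ℕ) : ℤ) % n) = (((c * x : ℕ) : ℤ) % n) := by
          push_cast
          exact Int.emod_emod_of_dvd _ dvd_rfl
        rw [jacobiSym.mod_left' hmod]
        push_cast
        rw [jacobiSym.mul_left, hJc]
        ring
      have hE : Complex.exp (2 * Real.pi * Complex.I * ((c * x % n : ℕ) * (r * f)) / n)
          = Complex.exp (2 * Real.pi * Complex.I * (x * (r * f)) / n) := by
        apply expEq
        have e1 : ((c * x % n : ℕ) : ℤ) ≡ ((c : ℤ) * x) [ZMOD (n : ℤ)] := by
          push_cast
          exact Int.emod_emod_of_dvd _ dvd_rfl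
        have e2 : (c : ℤ) * x * (r * f) ≡ (x : ℤ) * (r * f) [ZMOD (n : ℤ)] := by
          refine Int.modEq_iff_dvd.mpr ?_
          obtain ⟨k, hk⟩ := Nat.ModEq.dvd hc2
          obtain ⟨f', hf'⟩ := hpf
          refine ⟨k * x * r * f', ?_⟩
          have hfZ : (f : ℤ) = p * f' := by exact_mod_cast congrArg (Nat.cast : ℕ → ℤ) hf'
          have hnZ : (n : ℤ) = p * n' := by exact_mod_cast congrArg (Nat.cast : ℕ → ℤ) hnn'
          rw [hnZ, hfZ]
          linear_combination ((x : ℤ) * r * p * f') * hk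
        have full := (e1.mul_right ((r : ℤ) * f)).trans e2
        exact full.symm.dvd
      rw [hg]
      simp only []
      rw [hJ, hE]
      push_cast
      ring
  have key2 : ∑ x ∈ S, g x = -1 * ∑ x ∈ S, g x := by
    nth_rewrite 1 [key]
    rw [← Finset.mul_sum]
  have : ∑ x ∈ S, g x = 0 := by linear_combination key2 * (1 / 2 : ℂ)
  exact this
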